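/- arXiv:1703.02513 — 2 statements merged into one kernel-verified Lean document; each statement's English description precedes it below -/
import Mathlib

section
/- The map ε sending (ν, μ_1, ..., μ_k) to (ν ∪ μ_1^t ∪ ... ∪ μ_k^t, μ_1^t, ..., μ_k^t), where μ_i^t denotes the transpose (conjugate) partition, is a bijection from Q_{n,r_1,...,r_k} to P_{n,r_1,...,r_k}. -/
/-- The conjugate (transpose) of a partition, represented as a multiset of
(positive) parts: the parts of `conj s` are the column lengths of the Young
diagram of `s`. -/
def conj (s : Multiset ℕ) : Multiset ℕ :=
  ((Multiset.range s.sum).map fun i => Multiset.card (s.filter fun p => i + 1 ≤ p)).filter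
    fun m => 0 < m

namespace ConjAux
open Multiset

/-- `D s v` is the number of parts of `s` that are at least `v`. -/
def D (s : Multiset ℕ) (v : ℕ) : ℕ := countP (fun p => v ≤ p) s

lemma conj_eq (s : Multiset ℕ) :
    conj s = (((Multiset.range s.sum).map fun i => D s (i + 1)).filter fun m => 0 < m) := by
  simp only [conj, D, countP_eq_card_filter]

lemma D_anti (s : Multiset ℕ) {v w : ℕ} (h : v ≤ w) : D s w ≤ D s v := by
  rw [D, D, countP_eq_card_filter, countP_eq_card_filter]
  exact card_le_card (monotone_filter_right s fun a ha => le_trans h ha)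

lemma D_le_card (s : Multiset ℕ) (v : ℕ) : D s v ≤ card s := countP_le_card _ _

lemma part_le_sum {s : Multiset ℕ} {p : ℕ} (hp : p ∈ s) : p ≤ s.sum :=
  single_le_sum (fun _ _ => Nat.zero_le _) _ hp

lemma card_le_sum {s : Multiset ℕ} (hs : ∀ x ∈ s, 0 < x) : card s ≤ s.sum := by
  induction s using Multiset.induction with
  | empty => simp
  | cons a t ih =>
    have ha : 0 < a := hs a (mem_cons_self _ _)
    have := ih fun x hx => hs x (mem_cons_of_mem hx)
    simp only [card_cons, sum_cons]
    omega

lemma D_eq_zero {s : Multiset ℕ} {v : ℕ} (h : s.sum < v) : D s v = 0 := by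
  rw [D, countP_eq_zero]
  intro p hp hvp
  exact absurd (le_trans hvp (part_le_sum hp)) (by omega)

lemma countP_lt_range (K N : ℕ) :
    countP (fun i => i < K) (Multiset.range N) = min K N := by
  induction N with
  | zero => simp
  | succ N ih =>
    rw [Multiset.range_succ, countP_cons, ih]
    by_cases h : N < K <;> simp [h] <;> omega

lemma countP_range (p : ℕ → Prop) [DecidablePred p] (N : ℕ) :
    countP p (Multiset.range N) = ((Finset.range N).filter p).card := by
  rw [countP_eq_card_filter]; rfl

lemma mem_conj_pos {s : Multiset ℕ} {x : ℕ} (h : x ∈ conj s) : 0 < x := by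
  rw [conj_eq, mem_filter] at h
  exact h.2

lemma mem_conj_le_card {s : Multiset ℕ} {x : ℕ} (h : x ∈ conj s) : x ≤ card s := by
  rw [conj_eq, mem_filter, mem_map] at h
  obtain ⟨⟨i, _, hi⟩, _⟩ := h
  rw [← hi]
  exact D_le_card _ _

lemma sum_count (s : Multiset ℕ) (N : ℕ) (h : ∀ p ∈ s, p ≤ N) :
    ∑ i ∈ Finset.range N, D s (i + 1) = s.sum := by
  induction s using Multiset.induction with
  | empty => simp [D]
  | cons a t ih =>
    have ha : a ≤ N := h a (mem_cons_self _ _)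
    have hD : ∀ i, D (a ::ₘ t) (i + 1) = D t (i + 1) + if i + 1 ≤ a then 1 else 0 :=
      fun i => countP_cons _ _ _
    rw [sum_cons, Finset.sum_congr rfl fun i _ => hD i, Finset.sum_add_distrib,
      ih fun p hp => h p (mem_cons_of_mem hp)]
    have h2 : (∑ i ∈ Finset.range N, if i + 1 ≤ a then 1 else 0) =
        ((Finset.range N).filter fun i => i + 1 ≤ a).card := by
      rw [Finset.sum_boole]; rfl
    have h3 : ((Finset.range N).filter fun i => i + 1 ≤ a).card = min a N := by
      rw [← countP_range]; exact countP_lt_range a N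
    omega

lemma sum_conj (s : Multiset ℕ) : (conj s).sum = s.sum := by
  rw [conj_eq]
  have h1 : ∀ (m : Multiset ℕ), (m.filter fun x => 0 < x).sum = m.sum := by
    intro m
    conv_rhs => rw [← filter_add_not (fun x => 0 < x) m]
    rw [sum_add, sum_eq_zero (s := m.filter fun a => ¬0 < a) (fun x hx => by
      have := (mem_filter.1 hx).2; omega)]
    omega
  rw [h1]
  have : ((Multiset.range s.sum).map fun i => D s (i + 1)).sum =
      ∑ i ∈ Finset.range s.sum, D s (i + 1) := rfl
  rw [this, sum_count s s.sum fun p hp => part_le_sum hp]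

lemma D_conj (s : Multiset ℕ) {v : ℕ} (hv : 1 ≤ v) :
    D (conj s) v = countP (fun i => v ≤ D s (i + 1)) (Multiset.range s.sum) := by
  rw [conj_eq, D, countP_filter, countP_map]
  rw [← countP_eq_card_filter]
  refine countP_congr rfl fun i _ => ?_
  simp only [eq_iff_iff]
  constructor
  · intro h; exact h.1
  · intro h; exact ⟨h, by omega⟩

lemma key_iff (s : Multiset ℕ) {t v : ℕ} (ht : 1 ≤ t) (hv : 1 ≤ v) :
    t ≤ countP (fun i => v ≤ D s (i + 1)) (Multiset.range s.sum) ↔ v ≤ D s t := by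
  set N := s.sum with hN
  rw [countP_range]
  set S := (Finset.range N).filter fun i => v ≤ D s (i + 1) with hS
  constructor
  · intro h
    have : ∃ j ∈ S, t - 1 ≤ j := by
      by_contra hcon
      push_neg at hcon
      have hsub : S ⊆ Finset.range (t - 1) := fun j hj => Finset.mem_range.2 (hcon j hj)
      have := Finset.card_le_card hsub
      rw [Finset.card_range] at this
      omega
    obtain ⟨j, hj, hjt⟩ := this
    have hvj : v ≤ D s (j + 1) := (Finset.mem_filter.1 hj).2
    exact le_trans hvj (D_anti s (by omega))
  · intro h
    have hDpos : 0 < D s t := by omega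
    have htN : t ≤ N := by
      rw [D, countP_pos] at hDpos
      obtain ⟨p, hp, htp⟩ := hDpos
      exact le_trans htp (part_le_sum hp)
    have hsub : Finset.range t ⊆ S := by
      intro j hj
      rw [Finset.mem_range] at hj
      refine Finset.mem_filter.2 ⟨Finset.mem_range.2 (by omega), ?_⟩
      exact le_trans h (D_anti s (by omega))
    have := Finset.card_le_card hsub
    rwa [Finset.card_range] at this

lemma D_le_sum {s : Multiset ℕ} (hs : ∀ x ∈ s, 0 < x) {v : ℕ} (hv : 1 ≤ v) :
    D s v ≤ s.sum :=
  le_trans (D_le_card s v) (card_le_sum hs)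

lemma D_conj_conj {s : Multiset ℕ} (hs : ∀ x ∈ s, 0 < x) {v : ℕ} (hv : 1 ≤ v) :
    D (conj (conj s)) v = D s v := by
  rw [D_conj (conj s) hv, sum_conj]
  have hcongr : countP (fun i => v ≤ D (conj s) (i + 1)) (Multiset.range s.sum) =
      countP (fun i => i < D s v) (Multiset.range s.sum) := by
    refine countP_congr rfl fun i _ => ?_
    simp only [eq_iff_iff]
    rw [D_conj s (by omega : 1 ≤ i + 1)]
    rw [key_iff s hv (by omega : 1 ≤ i + 1)]
    omega
  rw [hcongr, countP_lt_range]
  exact min_eq_left (D_le_sum hs hv)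

lemma D_succ (u : Multiset ℕ) (m : ℕ) : D u m = D u (m + 1) + count m u := by
  induction u using Multiset.induction with
  | empty => simp [D]
  | cons a t ih =>
    simp only [D] at ih ⊢
    rw [countP_cons, countP_cons, count_cons, ih]
    split_ifs <;> omega

lemma conj_conj {s : Multiset ℕ} (hs : ∀ x ∈ s, 0 < x) : conj (conj s) = s := by
  ext m
  rcases Nat.eq_zero_or_pos m with hm | hm
  · subst hm
    rw [count_eq_zero.2 (fun h => by have := mem_conj_pos h; omega),
      count_eq_zero.2 (fun h => by have := hs 0 h; omega)]
  · have h1 := D_succ (conj (conj s)) m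
    have h2 := D_succ s m
    rw [D_conj_conj hs hm, D_conj_conj hs (by omega : 1 ≤ m + 1)] at h1
    omega

lemma card_conj_le {s : Multiset ℕ} {r : ℕ} (h : ∀ p ∈ s, p ≤ r) :
    card (conj s) ≤ r := by
  rw [conj_eq, ← countP_eq_card_filter, countP_map, ← countP_eq_card_filter]
  have hmono : countP (fun i => 0 < D s (i + 1)) (Multiset.range s.sum) ≤
      countP (fun i => i < r) (Multiset.range s.sum) := by
    rw [countP_eq_card_filter, countP_eq_card_filter]
    refine card_le_card (monotone_filter_right _ fun i hi => ?_)
    rw [D, countP_pos] at hi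
    obtain ⟨p, hp, hip⟩ := hi
    have := h p hp
    omega
  calc countP (fun i => 0 < D s (i + 1)) (Multiset.range s.sum) ≤ _ := hmono
    _ = min r s.sum := countP_lt_range r s.sum
    _ ≤ r := min_le_left _ _

lemma sum_sum {k : ℕ} (m : Fin k → Multiset ℕ) :
    (∑ i, m i).sum = ∑ i, (m i).sum := by
  rw [← Multiset.coe_sumAddMonoidHom, map_sum]

lemma multiset_sum_le_sum {a b : Multiset ℕ} (h : a ≤ b) : a.sum ≤ b.sum := by
  obtain ⟨u, rfl⟩ := Multiset.le_iff_exists_add.1 h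
  rw [sum_add]; omega

end ConjAux

open ConjAux Multiset in
/-- The map `ε : (ν, μ_1, …, μ_k) ↦ (ν ∪ μ_1ᵗ ∪ ⋯ ∪ μ_kᵗ, μ_1ᵗ, …, μ_kᵗ)` is a
bijection from `Q_{n,r_1,…,r_k}` to `P_{n,r_1,…,r_k}`. -/
theorem stmt1 (n k : ℕ) (r : Fin k → ℕ) :
    ∃ e : {q : Multiset ℕ × (Fin k → Multiset ℕ) //
            (∀ x ∈ q.1, 0 < x) ∧ (∀ i, ∀ x ∈ q.2 i, 0 < x ∧ x ≤ r i) ∧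
            (∑ i, (q.2 i).sum) ≤ n ∧ q.1.sum = n - ∑ i, (q.2 i).sum} ≃
          {p : Multiset ℕ × (Fin k → Multiset ℕ) //
            (∀ x ∈ p.1, 0 < x) ∧ p.1.sum = n ∧ (∀ i, Multiset.card (p.2 i) ≤ r i) ∧
            (∑ i, p.2 i) ≤ p.1},
      ∀ q, (e q).val.1 = q.val.1 + ∑ i, conj (q.val.2 i) ∧
        ∀ i, (e q).val.2 i = conj (q.val.2 i) := by
  have fwd_mem : ∀ (ν : Multiset ℕ) (μ : Fin k → Multiset ℕ),
      (∀ x ∈ ν, 0 < x) → (∀ i, ∀ x ∈ μ i, 0 < x ∧ x ≤ r i) →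
      (∑ i, (μ i).sum) ≤ n → ν.sum = n - ∑ i, (μ i).sum →
      (∀ x ∈ ν + ∑ i, conj (μ i), 0 < x) ∧ (ν + ∑ i, conj (μ i)).sum = n ∧
        (∀ i, Multiset.card (conj (μ i)) ≤ r i) ∧
        (∑ i, conj (μ i)) ≤ ν + ∑ i, conj (μ i) := by
    intro ν μ hν hμ hle hsum
    refine ⟨?_, ?_, ?_, le_add_left _ _⟩
    · intro x hx
      rw [mem_add] at hx
      rcases hx with hx | hx
      · exact hν x hx
      · rw [Multiset.mem_sum] at hx
        obtain ⟨i, _, hx⟩ := hx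
        exact mem_conj_pos hx
    · rw [sum_add, ConjAux.sum_sum]
      have : ∀ i, (conj (μ i)).sum = (μ i).sum := fun i => sum_conj (μ i)
      rw [Finset.sum_congr rfl fun i _ => this i, hsum]
      omega
    · exact fun i => card_conj_le fun p hp => (hμ i p hp).2
  have bwd_mem : ∀ (lam : Multiset ℕ) (τ : Fin k → Multiset ℕ),
      (∀ x ∈ lam, 0 < x) → lam.sum = n → (∀ i, Multiset.card (τ i) ≤ r i) →
      (∑ i, τ i) ≤ lam →
      (∀ x ∈ lam - ∑ i, τ i, 0 < x) ∧
        (∀ i, ∀ x ∈ conj (τ i), 0 < x ∧ x ≤ r i) ∧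
        (∑ i, (conj (τ i)).sum) ≤ n ∧
        (lam - ∑ i, τ i).sum = n - ∑ i, (conj (τ i)).sum := by
    intro lam τ hlam hsum hcard hle
    have hconjsum : ∀ i, (conj (τ i)).sum = (τ i).sum := fun i => sum_conj (τ i)
    have hτsum : (∑ i, (conj (τ i)).sum) = (∑ i, τ i).sum := by
      rw [ConjAux.sum_sum]
      exact Finset.sum_congr rfl fun i _ => hconjsum i
    have hτn : (∑ i, (conj (τ i)).sum) ≤ n := by
      rw [hτsum, ← hsum]
      exact multiset_sum_le_sum hle
    refine ⟨?_, ?_, hτn, ?_⟩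
    · intro x hx
      exact hlam x (mem_of_le (tsub_le_self) hx)
    · intro i x hx
      exact ⟨mem_conj_pos hx, le_trans (mem_conj_le_card hx) (hcard i)⟩
    · have h1 : (lam - ∑ i, τ i).sum + (∑ i, τ i).sum = lam.sum := by
        rw [← Multiset.sum_add, tsub_add_cancel_of_le hle]
      rw [hτsum]
      omega
  have hpos_of_le : ∀ (lam : Multiset ℕ) (τ : Fin k → Multiset ℕ),
      (∀ x ∈ lam, 0 < x) → (∑ i, τ i) ≤ lam → ∀ i, ∀ x ∈ τ i, 0 < x := by
    intro lam τ hlam hle i x hx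
    refine hlam x (mem_of_le hle ?_)
    rw [Multiset.mem_sum]
    exact ⟨i, Finset.mem_univ i, hx⟩
  refine ⟨{
    toFun := fun q =>
      ⟨(q.val.1 + ∑ i, conj (q.val.2 i), fun i => conj (q.val.2 i)),
        fwd_mem q.val.1 q.val.2 q.property.1 q.property.2.1 q.property.2.2.1
          q.property.2.2.2⟩
    invFun := fun p =>
      ⟨(p.val.1 - ∑ i, p.val.2 i, fun i => conj (p.val.2 i)),
        bwd_mem p.val.1 p.val.2 p.property.1 p.property.2.1 p.property.2.2.1
          p.property.2.2.2⟩
    left_inv := ?_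
    right_inv := ?_ }, fun q => ⟨rfl, fun i => rfl⟩⟩
  · rintro ⟨⟨ν, μ⟩, hν, hμ, hle, hsum⟩
    apply Subtype.ext
    simp only
    have hcc : ∀ i, conj (conj (μ i)) = μ i :=
      fun i => conj_conj fun x hx => (hμ i x hx).1
    refine Prod.ext ?_ ?_
    · simp only [hcc]
      exact add_tsub_cancel_right _ _
    · funext i
      exact hcc i
  · rintro ⟨⟨lam, τ⟩, hlam, hsum, hcard, hle⟩
    apply Subtype.ext
    simp only
    have hcc : ∀ i, conj (conj (τ i)) = τ i :=
      fun i => conj_conj (hpos_of_le lam τ hlam hle i)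
    refine Prod.ext ?_ ?_
    · simp only [hcc]
      exact tsub_add_cancel_of_le hle
    · funext i
      exact hcc i
end

section
/- Let p: Z → H be a finite flat morphism of schemes of constant degree m and E a locally free sheaf of rank r on the source of a morphism q: Z → Y. Then the pushforward p_*(q^*E) is a locally free sheaf of rank r·m on H. -/
/-- Affine-local form of the tautological bundle statement: if `B` is an
`A`-algebra which is finite locally free (free) of rank `m` over `A` (the finite
flat degree-`m` morphism), and `M` is a finite free `B`-module of rank `r` (the
pullback of the rank-`r` bundle), then `M`, viewed as an `A`-module (the
pushforward), is free of rank `r·m`. -/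
theorem stmt17 (A B M : Type*) [CommRing A] [CommRing B] [Algebra A B]
    [AddCommGroup M] [Module B M] [Module A M] [IsScalarTower A B M]
    [Module.Free A B] [Module.Finite A B] [Module.Free B M] [Module.Finite B M]
    (m r : ℕ) (hm : Module.finrank A B = m) (hr : Module.finrank B M = r) :
    Module.Free A M ∧ Module.finrank A M = r * m := by
  obtain ⟨⟨ι, b⟩⟩ := Module.Free.exists_basis (R := A) (M := B)
  obtain ⟨⟨ι', c⟩⟩ := Module.Free.exists_basis (R := B) (M := M)
  refine ⟨Module.Free.of_basis (b.smulTower c), ?_⟩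
  rcases subsingleton_or_nontrivial B with hB | hB
  · have hM : Subsingleton M := by
      refine ⟨fun x y => ?_⟩
      calc x = (1 : B) • x := by simp
        _ = (0 : B) • x := by rw [Subsingleton.elim (1 : B) 0]
        _ = (0 : B) • y := by simp
        _ = (1 : B) • y := by rw [Subsingleton.elim (0 : B) 1]
        _ = y := by simp
    have hr1 : r = 1 := by
      rw [← hr, Module.finrank, rank_subsingleton]; simp
    rcases subsingleton_or_nontrivial A with hA | hA
    · have hm1 : m = 1 := by
        rw [← hm, Module.finrank, rank_subsingleton]; simp
      have : Module.finrank A M = 1 := by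
        rw [Module.finrank, rank_subsingleton]; simp
      rw [this, hr1, hm1]
    · have hm0 : m = 0 := by
        rw [← hm]
        exact Module.finrank_zero_of_subsingleton
      have : Module.finrank A M = 0 := Module.finrank_zero_of_subsingleton
      rw [this, hm0, Nat.mul_zero]
  · have hA : Nontrivial A := by
      refine ⟨0, 1, fun h => ?_⟩
      have : (0 : B) = 1 := by
        rw [← (algebraMap A B).map_zero, h, (algebraMap A B).map_one]
      exact zero_ne_one this
    rw [← Module.finrank_mul_finrank A B M, hm, hr, Nat.mul_comm]
end
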